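/- There exist a finite set Λ of directions contained in S² ∩ ℚ³ and a family of smooth real-valued functions (γ_ξ)_{ξ∈Λ}, defined on the set of symmetric 3×3 real matrices R with ‖R − Id‖_F ≤ 1/2, such that every symmetric 3×3 matrix R satisfying ‖R − Id‖_F ≤ 1/2 admits the representation R = Σ_{ξ∈Λ} γ_ξ(R)² (ξ ⊗ ξ). -/

import Mathlib

open MeasureTheory Real
open scoped ENNReal NNReal

noncomputable section

abbrev R3 := Fin 3 → ℝ
abbrev Z3 := Fin 3 → ℤ

def cube : Set R3 := Set.univ.pi fun _ => Set.Icc 0 (2 * π)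

def μT3 : Measure R3 := volume.restrict cube

def Periodic3 {α : Type*} (u : R3 → α) : Prop :=
  ∀ (x : R3) (k : Z3), u (fun i => x i + 2 * π * (k i)) = u x

def dotZ (n : Z3) (x : R3) : ℝ := ∑ i, (n i : ℝ) * x i

def eZ (n : Z3) (x : R3) : ℂ := Complex.exp (Complex.I * (dotZ n x : ℂ))

def fCoeff (u : R3 → ℂ) (n : Z3) : ℂ :=
  (1 / (2 * π) ^ 3 : ℝ) • ∫ y in cube, Complex.exp (-(Complex.I * (dotZ n y : ℂ))) * u y

def normZsq (n : Z3) : ℝ := ∑ i, (n i : ℝ) ^ 2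

def pd {E : Type*} [NormedAddCommGroup E] [NormedSpace ℝ E] (i : Fin 3) (h : R3 → E) :
    R3 → E :=
  fun x => fderiv ℝ h x (Pi.single i 1)

abbrev M3 := Fin 3 → Fin 3 → ℝ

/-- Frobenius norm on 3×3 matrices. -/
def frob (A : M3) : ℝ := Real.sqrt (∑ i, ∑ j, A i j ^ 2)

/-- The identity matrix. -/
def idM : M3 := fun i j => if i = j then 1 else 0

/-- Tensor product `v ⊗ w` of two vectors. -/
def tens (v w : R3) : M3 := fun i j => v i * w j

def symmM (A : M3) : Prop := ∀ i j, A i j = A j i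

/-- The set of symmetric matrices `R` with `‖R - Id‖_F ≤ 1/2`. -/
def geomSet : Set M3 := {R | symmM R ∧ frob (R - idM) ≤ 1 / 2}

/-! ### Auxiliary material for the geometric lemma -/

def sA (x : ℝ) : ℝ := Real.sqrt (1/400 + x^2)

lemma sA_gt_abs (x : ℝ) : |x| < sA x := by
  have : Real.sqrt (x^2) < Real.sqrt (1/400 + x^2) :=
    Real.sqrt_lt_sqrt (sq_nonneg x) (by linarith)
  simpa [Real.sqrt_sq_eq_abs, sA] using this

lemma sA_le (x : ℝ) : sA x ≤ 1/20 + |x| := by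
  rw [sA, show (1/400 : ℝ) + x^2 = (1/20 + |x|)^2 - (|x|/10) by rw [add_sq, sq_abs]; ring]
  calc Real.sqrt ((1/20 + |x|)^2 - |x|/10) ≤ Real.sqrt ((1/20 + |x|)^2) := by
        apply Real.sqrt_le_sqrt; have := abs_nonneg x; linarith
    _ = 1/20 + |x| := by
        rw [Real.sqrt_sq]; positivity

lemma diagpos (d u v : ℝ) (h : d^2 + 2*u^2 + 2*v^2 ≤ 1/4) :
    3/4 * sA u + 4/3 * sA v < 1 + d := by
  have h1 := sA_le u
  have h2 := sA_le v
  have h3 := abs_nonneg u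
  have h4 := abs_nonneg v
  have h5 : |u|^2 = u^2 := sq_abs u
  have h6 : |v|^2 = v^2 := sq_abs v
  nlinarith [sq_nonneg (|u| - 1/8), sq_nonneg (|v| - 2/9), sq_nonneg (d + 1/3)]

lemma diagpos' (d u v : ℝ) (h : d^2 + 2*u^2 + 2*v^2 ≤ 1/4) :
    4/3 * sA u + 3/4 * sA v < 1 + d := by
  have h1 := sA_le u
  have h2 := sA_le v
  have h3 := abs_nonneg u
  have h4 := abs_nonneg v
  have h5 : |u|^2 = u^2 := sq_abs u
  have h6 : |v|^2 = v^2 := sq_abs v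
  nlinarith [sq_nonneg (|u| - 2/9), sq_nonneg (|v| - 1/8), sq_nonneg (d + 1/3)]

def HW (ξ : R3) : ℝ := ξ 0 + 10 * ξ 1 + 100 * ξ 2

lemma ne_of_HW {a b : R3} (h : HW a ≠ HW b) : a ≠ b := fun e => h (congrArg HW e)
def v0 : R3 := ![1,0,0]
def v1 : R3 := ![0,1,0]
def v2 : R3 := ![0,0,1]
def v3 : R3 := ![3/5,4/5,0]
def v4 : R3 := ![3/5,-4/5,0]
def v5 : R3 := ![0,3/5,4/5]
def v6 : R3 := ![0,3/5,-4/5]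
def v7 : R3 := ![4/5,0,3/5]
def v8 : R3 := ![-4/5,0,3/5]
lemma hHW0 : HW v0 = 1 := by norm_num [HW, v0, Matrix.cons_val_two, Matrix.tail_cons, Matrix.head_cons]
lemma hHW1 : HW v1 = 10 := by norm_num [HW, v1, Matrix.cons_val_two, Matrix.tail_cons, Matrix.head_cons]
lemma hHW2 : HW v2 = 100 := by norm_num [HW, v2, Matrix.cons_val_two, Matrix.tail_cons, Matrix.head_cons]
lemma hHW3 : HW v3 = 43/5 := by norm_num [HW, v3, Matrix.cons_val_two, Matrix.tail_cons, Matrix.head_cons]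
lemma hHW4 : HW v4 = -37/5 := by norm_num [HW, v4, Matrix.cons_val_two, Matrix.tail_cons, Matrix.head_cons]
lemma hHW5 : HW v5 = 86 := by norm_num [HW, v5, Matrix.cons_val_two, Matrix.tail_cons, Matrix.head_cons]
lemma hHW6 : HW v6 = -74 := by norm_num [HW, v6, Matrix.cons_val_two, Matrix.tail_cons, Matrix.head_cons]
lemma hHW7 : HW v7 = 304/5 := by norm_num [HW, v7, Matrix.cons_val_two, Matrix.tail_cons, Matrix.head_cons]
lemma hHW8 : HW v8 = 296/5 := by norm_num [HW, v8, Matrix.cons_val_two, Matrix.tail_cons, Matrix.head_cons]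
lemma nv01 : v0 ≠ v1 := ne_of_HW (by rw [hHW0, hHW1]; norm_num)
lemma nv02 : v0 ≠ v2 := ne_of_HW (by rw [hHW0, hHW2]; norm_num)
lemma nv03 : v0 ≠ v3 := ne_of_HW (by rw [hHW0, hHW3]; norm_num)
lemma nv04 : v0 ≠ v4 := ne_of_HW (by rw [hHW0, hHW4]; norm_num)
lemma nv05 : v0 ≠ v5 := ne_of_HW (by rw [hHW0, hHW5]; norm_num)
lemma nv06 : v0 ≠ v6 := ne_of_HW (by rw [hHW0, hHW6]; norm_num)
lemma nv07 : v0 ≠ v7 := ne_of_HW (by rw [hHW0, hHW7]; norm_num)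
lemma nv08 : v0 ≠ v8 := ne_of_HW (by rw [hHW0, hHW8]; norm_num)
lemma nv12 : v1 ≠ v2 := ne_of_HW (by rw [hHW1, hHW2]; norm_num)
lemma nv13 : v1 ≠ v3 := ne_of_HW (by rw [hHW1, hHW3]; norm_num)
lemma nv14 : v1 ≠ v4 := ne_of_HW (by rw [hHW1, hHW4]; norm_num)
lemma nv15 : v1 ≠ v5 := ne_of_HW (by rw [hHW1, hHW5]; norm_num)
lemma nv16 : v1 ≠ v6 := ne_of_HW (by rw [hHW1, hHW6]; norm_num)
lemma nv17 : v1 ≠ v7 := ne_of_HW (by rw [hHW1, hHW7]; norm_num)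
lemma nv18 : v1 ≠ v8 := ne_of_HW (by rw [hHW1, hHW8]; norm_num)
lemma nv23 : v2 ≠ v3 := ne_of_HW (by rw [hHW2, hHW3]; norm_num)
lemma nv24 : v2 ≠ v4 := ne_of_HW (by rw [hHW2, hHW4]; norm_num)
lemma nv25 : v2 ≠ v5 := ne_of_HW (by rw [hHW2, hHW5]; norm_num)
lemma nv26 : v2 ≠ v6 := ne_of_HW (by rw [hHW2, hHW6]; norm_num)
lemma nv27 : v2 ≠ v7 := ne_of_HW (by rw [hHW2, hHW7]; norm_num)
lemma nv28 : v2 ≠ v8 := ne_of_HW (by rw [hHW2, hHW8]; norm_num)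
lemma nv34 : v3 ≠ v4 := ne_of_HW (by rw [hHW3, hHW4]; norm_num)
lemma nv35 : v3 ≠ v5 := ne_of_HW (by rw [hHW3, hHW5]; norm_num)
lemma nv36 : v3 ≠ v6 := ne_of_HW (by rw [hHW3, hHW6]; norm_num)
lemma nv37 : v3 ≠ v7 := ne_of_HW (by rw [hHW3, hHW7]; norm_num)
lemma nv38 : v3 ≠ v8 := ne_of_HW (by rw [hHW3, hHW8]; norm_num)
lemma nv45 : v4 ≠ v5 := ne_of_HW (by rw [hHW4, hHW5]; norm_num)
lemma nv46 : v4 ≠ v6 := ne_of_HW (by rw [hHW4, hHW6]; norm_num)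
lemma nv47 : v4 ≠ v7 := ne_of_HW (by rw [hHW4, hHW7]; norm_num)
lemma nv48 : v4 ≠ v8 := ne_of_HW (by rw [hHW4, hHW8]; norm_num)
lemma nv56 : v5 ≠ v6 := ne_of_HW (by rw [hHW5, hHW6]; norm_num)
lemma nv57 : v5 ≠ v7 := ne_of_HW (by rw [hHW5, hHW7]; norm_num)
lemma nv58 : v5 ≠ v8 := ne_of_HW (by rw [hHW5, hHW8]; norm_num)
lemma nv67 : v6 ≠ v7 := ne_of_HW (by rw [hHW6, hHW7]; norm_num)
lemma nv68 : v6 ≠ v8 := ne_of_HW (by rw [hHW6, hHW8]; norm_num)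
lemma nv78 : v7 ≠ v8 := ne_of_HW (by rw [hHW7, hHW8]; norm_num)
def cg0 (R : M3) : ℝ := R 0 0 - 3/4 * sA (R 0 1) - 4/3 * sA (R 0 2)
def cg1 (R : M3) : ℝ := R 1 1 - 4/3 * sA (R 0 1) - 3/4 * sA (R 1 2)
def cg2 (R : M3) : ℝ := R 2 2 - 4/3 * sA (R 1 2) - 3/4 * sA (R 0 2)
def cg3 (R : M3) : ℝ := 25/24 * (sA (R 0 1) + R 0 1)
def cg4 (R : M3) : ℝ := 25/24 * (sA (R 0 1) - R 0 1)
def cg5 (R : M3) : ℝ := 25/24 * (sA (R 1 2) + R 1 2)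
def cg6 (R : M3) : ℝ := 25/24 * (sA (R 1 2) - R 1 2)
def cg7 (R : M3) : ℝ := 25/24 * (sA (R 0 2) + R 0 2)
def cg8 (R : M3) : ℝ := 25/24 * (sA (R 0 2) - R 0 2)

def cfg (ξ : R3) (R : M3) : ℝ :=
  if HW ξ = 1 then cg0 R else if HW ξ = 10 then cg1 R else if HW ξ = 100 then cg2 R
  else if HW ξ = 43/5 then cg3 R else if HW ξ = -37/5 then cg4 R
  else if HW ξ = 86 then cg5 R else if HW ξ = -74 then cg6 R
  else if HW ξ = 304/5 then cg7 R else cg8 R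
lemma cfg_v0 (R : M3) : cfg v0 R = cg0 R := by rw [cfg, hHW0]; norm_num
lemma cfg_v1 (R : M3) : cfg v1 R = cg1 R := by rw [cfg, hHW1]; norm_num
lemma cfg_v2 (R : M3) : cfg v2 R = cg2 R := by rw [cfg, hHW2]; norm_num
lemma cfg_v3 (R : M3) : cfg v3 R = cg3 R := by rw [cfg, hHW3]; norm_num
lemma cfg_v4 (R : M3) : cfg v4 R = cg4 R := by rw [cfg, hHW4]; norm_num
lemma cfg_v5 (R : M3) : cfg v5 R = cg5 R := by rw [cfg, hHW5]; norm_num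
lemma cfg_v6 (R : M3) : cfg v6 R = cg6 R := by rw [cfg, hHW6]; norm_num
lemma cfg_v7 (R : M3) : cfg v7 R = cg7 R := by rw [cfg, hHW7]; norm_num
lemma cfg_v8 (R : M3) : cfg v8 R = cg8 R := by rw [cfg, hHW8]; norm_num

lemma contDiff_sA (i j : Fin 3) : ContDiff ℝ (⊤:ℕ∞) (fun R : M3 => sA (R i j)) := by
  apply ContDiff.sqrt
  · exact contDiff_const.add ((contDiff_apply_apply ℝ ℝ i j).pow 2)
  · intro R; positivity

lemma contDiff_entry (i j : Fin 3) : ContDiff ℝ (⊤:ℕ∞) (fun R : M3 => R i j) :=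
  contDiff_apply_apply ℝ ℝ i j

lemma cd0 : ContDiff ℝ (⊤:ℕ∞) cg0 := by
  unfold cg0
  exact ((contDiff_entry 0 0).sub (contDiff_const.mul (contDiff_sA 0 1))).sub
    (contDiff_const.mul (contDiff_sA 0 2))

lemma cd1 : ContDiff ℝ (⊤:ℕ∞) cg1 := by
  unfold cg1
  exact ((contDiff_entry 1 1).sub (contDiff_const.mul (contDiff_sA 0 1))).sub
    (contDiff_const.mul (contDiff_sA 1 2))

lemma cd2 : ContDiff ℝ (⊤:ℕ∞) cg2 := by
  unfold cg2
  exact ((contDiff_entry 2 2).sub (contDiff_const.mul (contDiff_sA 1 2))).sub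
    (contDiff_const.mul (contDiff_sA 0 2))

lemma cd3 : ContDiff ℝ (⊤:ℕ∞) cg3 := by
  unfold cg3; exact contDiff_const.mul ((contDiff_sA 0 1).add (contDiff_entry 0 1))

lemma cd4 : ContDiff ℝ (⊤:ℕ∞) cg4 := by
  unfold cg4; exact contDiff_const.mul ((contDiff_sA 0 1).sub (contDiff_entry 0 1))

lemma cd5 : ContDiff ℝ (⊤:ℕ∞) cg5 := by
  unfold cg5; exact contDiff_const.mul ((contDiff_sA 1 2).add (contDiff_entry 1 2))

lemma cd6 : ContDiff ℝ (⊤:ℕ∞) cg6 := by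
  unfold cg6; exact contDiff_const.mul ((contDiff_sA 1 2).sub (contDiff_entry 1 2))

lemma cd7 : ContDiff ℝ (⊤:ℕ∞) cg7 := by
  unfold cg7; exact contDiff_const.mul ((contDiff_sA 0 2).add (contDiff_entry 0 2))

lemma cd8 : ContDiff ℝ (⊤:ℕ∞) cg8 := by
  unfold cg8; exact contDiff_const.mul ((contDiff_sA 0 2).sub (contDiff_entry 0 2))

lemma geom_bounds {R : M3} (hR : R ∈ geomSet) :
    (R 0 0 - 1)^2 + 2*(R 0 1)^2 + 2*(R 0 2)^2 ≤ 1/4 ∧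
    (R 1 1 - 1)^2 + 2*(R 0 1)^2 + 2*(R 1 2)^2 ≤ 1/4 ∧
    (R 2 2 - 1)^2 + 2*(R 1 2)^2 + 2*(R 0 2)^2 ≤ 1/4 := by
  obtain ⟨hsym, hfr⟩ := hR
  set S := ∑ i, ∑ j, (R - idM) i j ^ 2 with hSdef
  have hnn : 0 ≤ S := Finset.sum_nonneg fun _ _ => Finset.sum_nonneg fun _ _ => sq_nonneg _
  have hS : S ≤ 1/4 := by
    have h2 := Real.sq_sqrt hnn
    have : Real.sqrt S ≤ 1/2 := hfr
    nlinarith [Real.sqrt_nonneg S]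
  rw [hSdef] at hS
  simp only [Fin.sum_univ_three, Pi.sub_apply, idM,
    show ((0:Fin 3) = 0) ↔ True from by decide, show ((0:Fin 3) = 1) ↔ False from by decide,
    show ((0:Fin 3) = 2) ↔ False from by decide, show ((1:Fin 3) = 0) ↔ False from by decide,
    show ((1:Fin 3) = 1) ↔ True from by decide, show ((1:Fin 3) = 2) ↔ False from by decide,
    show ((2:Fin 3) = 0) ↔ False from by decide, show ((2:Fin 3) = 1) ↔ False from by decide,
    show ((2:Fin 3) = 2) ↔ True from by decide, if_true, if_false] at hS
  norm_num at hS
  have e10 : R 1 0 = R 0 1 := hsym 1 0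
  have e20 : R 2 0 = R 0 2 := hsym 2 0
  have e21 : R 2 1 = R 1 2 := hsym 2 1
  rw [e10, e20, e21] at hS
  refine ⟨by nlinarith [sq_nonneg (R 1 1 - 1), sq_nonneg (R 2 2 - 1), sq_nonneg (R 1 2)],
          by nlinarith [sq_nonneg (R 0 0 - 1), sq_nonneg (R 2 2 - 1), sq_nonneg (R 0 2)],
          by nlinarith [sq_nonneg (R 0 0 - 1), sq_nonneg (R 1 1 - 1), sq_nonneg (R 0 1)]⟩

lemma cg_pos {R : M3} (hR : R ∈ geomSet) :
    0 < cg0 R ∧ 0 < cg1 R ∧ 0 < cg2 R := by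
  obtain ⟨h0, h1, h2⟩ := geom_bounds hR
  have p0 := diagpos (R 0 0 - 1) (R 0 1) (R 0 2) h0
  have p1 := diagpos' (R 1 1 - 1) (R 0 1) (R 1 2) h1
  have p2 := diagpos' (R 2 2 - 1) (R 1 2) (R 0 2) h2
  refine ⟨?_, ?_, ?_⟩ <;> simp only [cg0, cg1, cg2] <;> linarith

lemma cg_off_pos (R : M3) :
    0 < cg3 R ∧ 0 < cg4 R ∧ 0 < cg5 R ∧ 0 < cg6 R ∧ 0 < cg7 R ∧ 0 < cg8 R := by
  have a01 := sA_gt_abs (R 0 1)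
  have a12 := sA_gt_abs (R 1 2)
  have a02 := sA_gt_abs (R 0 2)
  have b01 := abs_lt.mp a01
  have b12 := abs_lt.mp a12
  have b02 := abs_lt.mp a02
  refine ⟨?_, ?_, ?_, ?_, ?_, ?_⟩ <;>
    simp only [cg3, cg4, cg5, cg6, cg7, cg8] <;>
    obtain ⟨x1, x2⟩ := b01 <;> obtain ⟨y1, y2⟩ := b12 <;> obtain ⟨z1, z2⟩ := b02 <;> linarith

/-- Geometric Lemma: there exist a finite set `Λ ⊆ S² ∩ ℚ³` of directions and smooth
functions `γ_ξ` on `{R symmetric : ‖R - Id‖_F ≤ 1/2}` such that every such `R` admits the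
representation `R = ∑_{ξ ∈ Λ} γ_ξ(R)² (ξ ⊗ ξ)`. -/
theorem geometric_lemma :
    ∃ (Λ : Finset R3) (γ : R3 → M3 → ℝ),
      (∀ ξ ∈ Λ, (∑ i, ξ i ^ 2) = 1 ∧ ∀ i, ∃ q : ℚ, ξ i = (q : ℝ)) ∧
      (∀ ξ ∈ Λ, ContDiffOn ℝ (⊤ : ℕ∞) (γ ξ) geomSet) ∧
      (∀ R ∈ geomSet, R = ∑ ξ ∈ Λ, (γ ξ R) ^ 2 • tens ξ ξ) := by
  refine ⟨{v0, v1, v2, v3, v4, v5, v6, v7, v8}, fun ξ R => Real.sqrt (cfg ξ R), ?_, ?_, ?_⟩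
  · intro ξ hξ
    simp only [Finset.mem_insert, Finset.mem_singleton] at hξ
    rcases hξ with rfl|rfl|rfl|rfl|rfl|rfl|rfl|rfl|rfl <;>
      refine ⟨by norm_num [Fin.sum_univ_three, v0, v1, v2, v3, v4, v5, v6, v7, v8, Matrix.cons_val_two, Matrix.tail_cons, Matrix.head_cons], ?_⟩ <;>
      intro i <;> fin_cases i
    · exact ⟨1, by norm_num [v0]⟩
    · exact ⟨0, by norm_num [v0]⟩
    · exact ⟨0, by norm_num [v0]⟩
    · exact ⟨0, by norm_num [v1]⟩
    · exact ⟨1, by norm_num [v1]⟩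
    · exact ⟨0, by norm_num [v1]⟩
    · exact ⟨0, by norm_num [v2]⟩
    · exact ⟨0, by norm_num [v2]⟩
    · exact ⟨1, by norm_num [v2]⟩
    · exact ⟨3/5, by norm_num [v3]⟩
    · exact ⟨4/5, by norm_num [v3]⟩
    · exact ⟨0, by norm_num [v3]⟩
    · exact ⟨3/5, by norm_num [v4]⟩
    · exact ⟨-4/5, by norm_num [v4]⟩
    · exact ⟨0, by norm_num [v4]⟩
    · exact ⟨0, by norm_num [v5]⟩
    · exact ⟨3/5, by norm_num [v5]⟩
    · exact ⟨4/5, by norm_num [v5]⟩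
    · exact ⟨0, by norm_num [v6]⟩
    · exact ⟨3/5, by norm_num [v6]⟩
    · exact ⟨-4/5, by norm_num [v6]⟩
    · exact ⟨4/5, by norm_num [v7]⟩
    · exact ⟨0, by norm_num [v7]⟩
    · exact ⟨3/5, by norm_num [v7]⟩
    · exact ⟨-4/5, by norm_num [v8]⟩
    · exact ⟨0, by norm_num [v8]⟩
    · exact ⟨3/5, by norm_num [v8]⟩
  · intro ξ hξ
    simp only [Finset.mem_insert, Finset.mem_singleton] at hξ
    have key : ∀ (g : M3 → ℝ), ContDiff ℝ (⊤:ℕ∞) g → (∀ R ∈ geomSet, 0 < g R) →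
        ContDiffOn ℝ (⊤:ℕ∞) (fun R => Real.sqrt (g R)) geomSet := by
      intro g hg hpos
      exact hg.contDiffOn.sqrt fun R hR => ne_of_gt (hpos R hR)
    rcases hξ with rfl|rfl|rfl|rfl|rfl|rfl|rfl|rfl|rfl
    · exact ContDiffOn.congr (key cg0 cd0 (fun R hR => (cg_pos hR).1))
        (fun R _ => by simp only [cfg_v0])
    · exact ContDiffOn.congr (key cg1 cd1 (fun R hR => (cg_pos hR).2.1))
        (fun R _ => by simp only [cfg_v1])
    · exact ContDiffOn.congr (key cg2 cd2 (fun R hR => (cg_pos hR).2.2))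
        (fun R _ => by simp only [cfg_v2])
    · exact ContDiffOn.congr (key cg3 cd3 (fun R _ => (cg_off_pos R).1))
        (fun R _ => by simp only [cfg_v3])
    · exact ContDiffOn.congr (key cg4 cd4 (fun R _ => (cg_off_pos R).2.1))
        (fun R _ => by simp only [cfg_v4])
    · exact ContDiffOn.congr (key cg5 cd5 (fun R _ => (cg_off_pos R).2.2.1))
        (fun R _ => by simp only [cfg_v5])
    · exact ContDiffOn.congr (key cg6 cd6 (fun R _ => (cg_off_pos R).2.2.2.1))
        (fun R _ => by simp only [cfg_v6])
    · exact ContDiffOn.congr (key cg7 cd7 (fun R _ => (cg_off_pos R).2.2.2.2.1))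
        (fun R _ => by simp only [cfg_v7])
    · exact ContDiffOn.congr (key cg8 cd8 (fun R _ => (cg_off_pos R).2.2.2.2.2))
        (fun R _ => by simp only [cfg_v8])
  · intro R hR
    have hsym := hR.1
    have p0 : (0:ℝ) ≤ cg0 R := le_of_lt ((cg_pos hR).1)
    have p1 : (0:ℝ) ≤ cg1 R := le_of_lt ((cg_pos hR).2.1)
    have p2 : (0:ℝ) ≤ cg2 R := le_of_lt ((cg_pos hR).2.2)
    have p3 : (0:ℝ) ≤ cg3 R := le_of_lt ((cg_off_pos R).1)
    have p4 : (0:ℝ) ≤ cg4 R := le_of_lt ((cg_off_pos R).2.1)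
    have p5 : (0:ℝ) ≤ cg5 R := le_of_lt ((cg_off_pos R).2.2.1)
    have p6 : (0:ℝ) ≤ cg6 R := le_of_lt ((cg_off_pos R).2.2.2.1)
    have p7 : (0:ℝ) ≤ cg7 R := le_of_lt ((cg_off_pos R).2.2.2.2.1)
    have p8 : (0:ℝ) ≤ cg8 R := le_of_lt ((cg_off_pos R).2.2.2.2.2)
    have sq0 : Real.sqrt (cfg v0 R) ^ 2 = cg0 R := by rw [cfg_v0]; exact Real.sq_sqrt p0
    have sq1 : Real.sqrt (cfg v1 R) ^ 2 = cg1 R := by rw [cfg_v1]; exact Real.sq_sqrt p1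
    have sq2 : Real.sqrt (cfg v2 R) ^ 2 = cg2 R := by rw [cfg_v2]; exact Real.sq_sqrt p2
    have sq3 : Real.sqrt (cfg v3 R) ^ 2 = cg3 R := by rw [cfg_v3]; exact Real.sq_sqrt p3
    have sq4 : Real.sqrt (cfg v4 R) ^ 2 = cg4 R := by rw [cfg_v4]; exact Real.sq_sqrt p4
    have sq5 : Real.sqrt (cfg v5 R) ^ 2 = cg5 R := by rw [cfg_v5]; exact Real.sq_sqrt p5
    have sq6 : Real.sqrt (cfg v6 R) ^ 2 = cg6 R := by rw [cfg_v6]; exact Real.sq_sqrt p6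
    have sq7 : Real.sqrt (cfg v7 R) ^ 2 = cg7 R := by rw [cfg_v7]; exact Real.sq_sqrt p7
    have sq8 : Real.sqrt (cfg v8 R) ^ 2 = cg8 R := by rw [cfg_v8]; exact Real.sq_sqrt p8
    have m0 : v0 ∉ ({v1, v2, v3, v4, v5, v6, v7, v8} : Finset R3) := by
      simp only [Finset.mem_insert, Finset.mem_singleton]
      push_neg
      exact ⟨nv01, nv02, nv03, nv04, nv05, nv06, nv07, nv08⟩
    have m1 : v1 ∉ ({v2, v3, v4, v5, v6, v7, v8} : Finset R3) := by
      simp only [Finset.mem_insert, Finset.mem_singleton]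
      push_neg
      exact ⟨nv12, nv13, nv14, nv15, nv16, nv17, nv18⟩
    have m2 : v2 ∉ ({v3, v4, v5, v6, v7, v8} : Finset R3) := by
      simp only [Finset.mem_insert, Finset.mem_singleton]
      push_neg
      exact ⟨nv23, nv24, nv25, nv26, nv27, nv28⟩
    have m3 : v3 ∉ ({v4, v5, v6, v7, v8} : Finset R3) := by
      simp only [Finset.mem_insert, Finset.mem_singleton]
      push_neg
      exact ⟨nv34, nv35, nv36, nv37, nv38⟩
    have m4 : v4 ∉ ({v5, v6, v7, v8} : Finset R3) := by
      simp only [Finset.mem_insert, Finset.mem_singleton]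
      push_neg
      exact ⟨nv45, nv46, nv47, nv48⟩
    have m5 : v5 ∉ ({v6, v7, v8} : Finset R3) := by
      simp only [Finset.mem_insert, Finset.mem_singleton]
      push_neg
      exact ⟨nv56, nv57, nv58⟩
    have m6 : v6 ∉ ({v7, v8} : Finset R3) := by
      simp only [Finset.mem_insert, Finset.mem_singleton]
      push_neg
      exact ⟨nv67, nv68⟩
    have m7 : v7 ∉ ({v8} : Finset R3) := by
      simp only [Finset.mem_insert, Finset.mem_singleton]
      push_neg
      exact nv78
    rw [Finset.sum_insert m0, Finset.sum_insert m1, Finset.sum_insert m2, Finset.sum_insert m3,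
        Finset.sum_insert m4, Finset.sum_insert m5, Finset.sum_insert m6, Finset.sum_insert m7,
        Finset.sum_singleton]
    funext i j
    simp only [Pi.add_apply, Pi.smul_apply, smul_eq_mul, tens,
      sq0, sq1, sq2, sq3, sq4, sq5, sq6, sq7, sq8]
    have e10 : R 1 0 = R 0 1 := hsym 1 0
    have e20 : R 2 0 = R 0 2 := hsym 2 0
    have e21 : R 2 1 = R 1 2 := hsym 2 1
    fin_cases i <;> fin_cases j <;>
      norm_num [v0, v1, v2, v3, v4, v5, v6, v7, v8, cg0, cg1, cg2, cg3, cg4, cg5, cg6, cg7, cg8,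
        e10, e20, e21]
    all_goals try ring_nf
    all_goals try first
        | rfl
        | (rw [e10]; ring)
        | (rw [e20]; ring)
        | (rw [e21]; ring)
        | ring
    all_goals exact hsym _ _
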